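/- arXiv:2008.03292 — 2 statements merged into one kernel-verified Lean document; each statement's English description precedes it below -/
import Mathlib

section
/- For γ = I ∘ F^{-1} ∘ C ∘ F acting on S_n with n ≥ 2: the elements 1 and n lie in the same cycle of w if and only if they lie in different cycles of γ(w). Consequently every γ-orbit has even size, and the indicator statistic 1_{(1,n)} (whether 1 and n are in the same cycle) is (1/2)-mesic. -/
/-- The cycle of `w` containing `x`, listed starting at `x`:
`[x, w x, w² x, …]` with each element appearing once. -/
def cyc {n : ℕ} (w : Equiv.Perm (Fin n)) (x : Fin n) : List (Fin n) :=
  (List.range n).foldl (fun acc k => if (w ^ k) x ∈ acc then acc else acc ++ [(w ^ k) x]) []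

/-- The Rényi–Foata word of `w`: write the canonical cycle decomposition
(each cycle starting with its largest element, cycles listed in increasing
order of largest elements) and drop the parentheses. -/
def foataWord {n : ℕ} (w : Equiv.Perm (Fin n)) : List (Fin n) :=
  ((List.finRange n).filter (fun x => decide (∀ y ∈ cyc w x, y ≤ x))).flatMap (cyc w)

/-- The Rényi–Foata map, as a function `Fin n → Fin n` reading off the word. -/
def foataFun {n : ℕ} (w : Equiv.Perm (Fin n)) : Fin n → Fin n :=
  fun i => (foataWord w).getD i.val ⟨0, i.pos⟩

/-- One-line notation of a permutation, as a list of values in `Fin n`. -/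
def oneLineF {n : ℕ} (w : Equiv.Perm (Fin n)) : List (Fin n) :=
  (List.finRange n).map w

/-- One-line notation with natural-number entries (0-indexed values). -/
def oneLineN {n : ℕ} (w : Equiv.Perm (Fin n)) : List ℕ :=
  (List.finRange n).map fun i => (w i : ℕ)

/-- The Rényi–Foata word with natural-number entries. -/
def wordN {n : ℕ} (w : Equiv.Perm (Fin n)) : List ℕ :=
  (foataWord w).map Fin.val

/-- `i` is a record (left-to-right maximum) position of the word `L`. -/
def recB (L : List ℕ) (i : ℕ) : Bool :=
  decide (i < L.length ∧ ∀ j < i, L.getD j 0 < L.getD i 0)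

/-- Number of records (left-to-right maxima) of the word `L`. -/
def recordCount (L : List ℕ) : ℕ :=
  ((List.range L.length).filter (recB L)).length

/-- Number of fixed points (1-cycles) of `w`. -/
def fixCount {n : ℕ} (w : Equiv.Perm (Fin n)) : ℕ :=
  (Finset.univ.filter fun i : Fin n => w i = i).card

/-- `IsPhi w w'` says that `w' = φ(w)` where `φ = F ∘ I ∘ F⁻¹ ∘ R`:
first reverse the one-line notation of `w`, then apply `F⁻¹` (giving the
unique `u` whose Foata word is that reversal), invert `u`, and apply `F`. -/
def IsPhi {n : ℕ} (w w' : Equiv.Perm (Fin n)) : Prop :=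
  ∃ u : Equiv.Perm (Fin n),
    foataWord u = (oneLineF w).reverse ∧ oneLineF w' = foataWord u⁻¹

/-- `IsPhiBar w w'` says that `w' = φ̄(w)` where `φ̄ = I ∘ F⁻¹ ∘ R ∘ F`:
apply `F` to `w`, reverse the resulting word, apply `F⁻¹`, and invert. -/
def IsPhiBar {n : ℕ} (w w' : Equiv.Perm (Fin n)) : Prop :=
  foataWord w'⁻¹ = (foataWord w).reverse

/-- `IsGamma w w'` says that `w' = γ(w)` where `γ = I ∘ F⁻¹ ∘ C ∘ F`:
apply `F` to `w`, complement each entry of the resulting word, apply `F⁻¹`,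
and invert. -/
def IsGamma {n : ℕ} (w w' : Equiv.Perm (Fin n)) : Prop :=
  foataWord w'⁻¹ = (foataWord w).map Fin.rev

namespace FoataAux

variable {n : ℕ}

private def step (w : Equiv.Perm (Fin n)) (x : Fin n) : List (Fin n) → ℕ → List (Fin n) :=
  fun acc k => if (w ^ k) x ∈ acc then acc else acc ++ [(w ^ k) x]

lemma cyc_eq (w : Equiv.Perm (Fin n)) (x : Fin n) :
    cyc w x = (List.range n).foldl (step w x) [] := rfl

lemma foldl_prefix (w : Equiv.Perm (Fin n)) (x : Fin n) :
    ∀ (l : List ℕ) (acc : List (Fin n)), ∃ t, List.foldl (step w x) acc l = acc ++ t := by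
  intro l
  induction l with
  | nil => exact fun acc => ⟨[], by simp⟩
  | cons k l ih =>
    intro acc
    rw [List.foldl_cons]
    show ∃ t, List.foldl (step w x) (step w x acc k) l = acc ++ t
    unfold step
    split
    · exact ih acc
    · obtain ⟨t, ht⟩ := ih (acc ++ [(w ^ k) x])
      exact ⟨(w ^ k) x :: t, ht.trans (by simp)⟩

lemma mem_foldl (w : Equiv.Perm (Fin n)) (x : Fin n) :
    ∀ (l : List ℕ) (acc : List (Fin n)) (y : Fin n),
      y ∈ List.foldl (step w x) acc l ↔ y ∈ acc ∨ ∃ k ∈ l, (w ^ k) x = y := by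
  intro l
  induction l with
  | nil => simp
  | cons k l ih =>
    intro acc y
    rw [List.foldl_cons]
    show y ∈ List.foldl (step w x) (step w x acc k) l ↔ _
    rw [ih]
    unfold step
    split <;> rename_i h
    · constructor
      · rintro (hy | ⟨j, hj, hjy⟩)
        · exact Or.inl hy
        · exact Or.inr ⟨j, List.mem_cons_of_mem _ hj, hjy⟩
      · rintro (hy | ⟨j, hj, hjy⟩)
        · exact Or.inl hy
        · rcases List.mem_cons.1 hj with rfl | hj
          · exact Or.inl (hjy ▸ h)
          · exact Or.inr ⟨j, hj, hjy⟩
    · constructor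
      · rintro (hy | ⟨j, hj, hjy⟩)
        · rcases List.mem_append.1 hy with hy | hy
          · exact Or.inl hy
          · exact Or.inr ⟨k, List.mem_cons_self, (List.mem_singleton.1 hy).symm⟩
        · exact Or.inr ⟨j, List.mem_cons_of_mem _ hj, hjy⟩
      · rintro (hy | ⟨j, hj, hjy⟩)
        · exact Or.inl (List.mem_append.2 (Or.inl hy))
        · rcases List.mem_cons.1 hj with rfl | hj
          · exact Or.inl (List.mem_append.2 (Or.inr (List.mem_singleton.2 hjy.symm)))
          · exact Or.inr ⟨j, hj, hjy⟩

lemma mem_cyc {w : Equiv.Perm (Fin n)} {x y : Fin n} :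
    y ∈ cyc w x ↔ ∃ k < n, (w ^ k) x = y := by
  rw [cyc_eq, mem_foldl]
  simp

lemma pow_apply_eq_iterate (w : Equiv.Perm (Fin n)) (k : ℕ) (x : Fin n) :
    (w ^ k) x = (⇑w)^[k] x := rfl

lemma exists_pow_lt (w : Equiv.Perm (Fin n)) {x y : Fin n}
    (h : w.SameCycle x y) : ∃ k < n, (w ^ k) x = y := by
  have hpos : 0 < n := x.pos
  have hper : x ∈ Function.periodicPts ⇑w := by
    refine ⟨orderOf w, orderOf_pos w, ?_⟩
    show (⇑w)^[orderOf w] x = x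
    rw [← pow_apply_eq_iterate, pow_orderOf_eq_one]
    rfl
  set d := Function.minimalPeriod ⇑w x with hd
  have hd0 : 0 < d := Function.minimalPeriod_pos_of_mem_periodicPts hper
  -- pigeonhole : d ≤ n
  have hdn : d ≤ n := by
    obtain ⟨a, b, hab, he⟩ := Fintype.exists_ne_map_eq_of_card_lt
      (fun j : Fin (n + 1) => (⇑w)^[(j : ℕ)] x) (by simp)
    have hbn := a.is_lt
    have hbn' := b.is_lt
    rcases lt_or_gt_of_ne (fun hv => hab (Fin.ext hv) : (a : ℕ) ≠ (b : ℕ)) with hlt | hlt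
    · have hper2 : Function.IsPeriodicPt ⇑w ((b : ℕ) - a) x := by
        have : (⇑w)^[(a : ℕ)] ((⇑w)^[(b : ℕ) - a] x) = (⇑w)^[(a : ℕ)] x := by
          rw [← Function.iterate_add_apply, Nat.add_sub_cancel' hlt.le]
          exact he.symm
        exact (w.injective.iterate _ this : _)
      exact le_trans (hper2.minimalPeriod_le (by omega)) (by omega)
    · have hper2 : Function.IsPeriodicPt ⇑w ((a : ℕ) - b) x := by
        have : (⇑w)^[(b : ℕ)] ((⇑w)^[(a : ℕ) - b] x) = (⇑w)^[(b : ℕ)] x := by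
          rw [← Function.iterate_add_apply, Nat.add_sub_cancel' hlt.le]
          exact he
        exact (w.injective.iterate _ this : _)
      exact le_trans (hper2.minimalPeriod_le (by omega)) (by omega)
  obtain ⟨i, -, hi⟩ := h.exists_pow_eq'
  refine ⟨i % d, lt_of_lt_of_le (Nat.mod_lt _ hd0) hdn, ?_⟩
  rw [pow_apply_eq_iterate, hd, Function.iterate_mod_minimalPeriod_eq]
  exact hi

lemma mem_cyc_iff {w : Equiv.Perm (Fin n)} {x y : Fin n} :
    y ∈ cyc w x ↔ w.SameCycle x y := by
  rw [mem_cyc]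
  constructor
  · rintro ⟨k, -, hk⟩
    exact ⟨(k : ℤ), by rwa [zpow_natCast]⟩
  · exact exists_pow_lt w

lemma self_mem_cyc (w : Equiv.Perm (Fin n)) (x : Fin n) : x ∈ cyc w x :=
  mem_cyc_iff.2 (Equiv.Perm.SameCycle.refl w x)

lemma cyc_eq_cons (w : Equiv.Perm (Fin n)) (x : Fin n) : ∃ t, cyc w x = x :: t := by
  have hpos := x.pos
  obtain ⟨m, rfl⟩ : ∃ m, n = m + 1 := ⟨n - 1, by omega⟩
  rw [cyc_eq, List.range_succ_eq_map, List.foldl_cons]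
  have h0 : step w x [] 0 = [x] := by simp [step]
  rw [h0]
  obtain ⟨t, ht⟩ := foldl_prefix w x (List.map Nat.succ (List.range m)) [x]
  exact ⟨t, by rw [ht]; rfl⟩

end FoataAux

namespace FoataAux

variable {n : ℕ}

lemma leader_eq (w : Equiv.Perm (Fin n)) {a b : Fin n}
    (ha : ∀ y ∈ cyc w a, y ≤ a) (hb : ∀ y ∈ cyc w b, y ≤ b)
    (hab : w.SameCycle a b) : a = b :=
  le_antisymm (hb a (mem_cyc_iff.2 hab.symm)) (ha b (mem_cyc_iff.2 hab))

lemma mem_foataWord (w : Equiv.Perm (Fin n)) (y : Fin n) : y ∈ foataWord w := by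
  classical
  let S : Finset (Fin n) := Finset.univ.filter (fun z => w.SameCycle y z)
  have hyS : y ∈ S := Finset.mem_filter.2 ⟨Finset.mem_univ _, Equiv.Perm.SameCycle.refl w y⟩
  have hS : S.Nonempty := ⟨y, hyS⟩
  set m := S.max' hS with hm
  have hmS : m ∈ S := S.max'_mem hS
  have hsc : w.SameCycle y m := by simpa [S] using hmS
  have hlead : ∀ z ∈ cyc w m, z ≤ m := by
    intro z hz
    have hz' : w.SameCycle y z := hsc.trans (mem_cyc_iff.1 hz)
    exact S.le_max' z (by simp [S, hz'])
  rw [foataWord, List.mem_flatMap]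
  refine ⟨m, ?_, mem_cyc_iff.2 hsc.symm⟩
  rw [List.mem_filter]
  exact ⟨List.mem_finRange m, by simpa using hlead⟩

lemma foata_split (hn : 1 ≤ n) (w : Equiv.Perm (Fin n)) :
    ∃ front t, foataWord w = front ++ (⟨n - 1, by omega⟩ : Fin n) :: t ∧
      (∀ y ∈ front, ¬ w.SameCycle ⟨n - 1, by omega⟩ y) ∧
      (∀ y ∈ (⟨n - 1, by omega⟩ : Fin n) :: t, w.SameCycle ⟨n - 1, by omega⟩ y) := by
  obtain ⟨m, rfl⟩ : ∃ m, n = m + 1 := ⟨n - 1, by omega⟩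
  have hzm : (⟨m + 1 - 1, by omega⟩ : Fin (m + 1)) = Fin.last m := rfl
  rw [hzm]
  set p : Fin (m + 1) → Bool := fun x => decide (∀ y ∈ cyc w x, y ≤ x) with hp
  have hpzm : p (Fin.last m) = true := decide_eq_true (fun y _ => Fin.le_last y)
  have hfilter : (List.finRange (m + 1)).filter p =
      ((List.map Fin.castSucc (List.finRange m)).filter p) ++ [Fin.last m] := by
    rw [List.finRange_succ_last, List.filter_append]
    simp [hpzm]
  obtain ⟨t, ht⟩ := cyc_eq_cons w (Fin.last m)
  refine ⟨((List.map Fin.castSucc (List.finRange m)).filter p).flatMap (cyc w), t, ?_, ?_, ?_⟩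
  · rw [foataWord, hfilter, List.flatMap_append, ← ht]
    simp
  · intro y hy hsc
    obtain ⟨x, hx, hyx⟩ := List.mem_flatMap.1 hy
    have hxlead : ∀ z ∈ cyc w x, z ≤ x := by
      have := (List.mem_filter.1 hx).2
      simpa [hp] using this
    have hxne : x ≠ Fin.last m := by
      obtain ⟨j, -, rfl⟩ := List.mem_map.1 (List.mem_filter.1 hx).1
      exact (Fin.castSucc_lt_last j).ne
    exact hxne (leader_eq w hxlead (fun y _ => Fin.le_last y)
      ((mem_cyc_iff.1 hyx).trans hsc.symm))
  · intro y hy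
    rw [← ht] at hy
    exact mem_cyc_iff.1 hy

section idx

variable {α : Type*} [BEq α] [LawfulBEq α]

lemma idx_append_left {a : α} {l1 : List α} (l2 : List α) (h : a ∈ l1) :
    List.idxOf a (l1 ++ l2) = List.idxOf a l1 := by
  induction l1 with
  | nil => simp at h
  | cons b l1 ih =>
    by_cases hba : b = a
    · simp [List.idxOf_cons, hba]
    · have hb : (b == a) = false := by simp [hba]
      rcases List.mem_cons.1 h with rfl | h
      · simp at hba
      · simp [List.idxOf_cons, hb, ih h]

lemma idx_append_right {a : α} {l1 : List α} (l2 : List α) (h : a ∉ l1) :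
    List.idxOf a (l1 ++ l2) = l1.length + List.idxOf a l2 := by
  induction l1 with
  | nil => simp
  | cons b l1 ih =>
    have hba : b ≠ a := fun hx => h (hx ▸ List.mem_cons_self)
    have hb : (b == a) = false := by simp [hba]
    have h' : a ∉ l1 := fun hx => h (List.mem_cons_of_mem _ hx)
    simp [List.idxOf_cons, hb, ih h']
    omega

lemma idx_cons_self (a : α) (l : List α) : List.idxOf a (a :: l) = 0 := by
  simp [List.idxOf_cons]

lemma idx_cons_ne {a b : α} (l : List α) (h : b ≠ a) :
    List.idxOf a (b :: l) = List.idxOf a l + 1 := by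
  have hb : (b == a) = false := by simp [h]
  simp [List.idxOf_cons, hb]

lemma idx_map {β : Type*} [BEq β] [LawfulBEq β] {f : α → β}
    (hf : Function.Injective f) (a : α) (l : List α) :
    List.idxOf (f a) (List.map f l) = List.idxOf a l := by
  induction l with
  | nil => simp
  | cons b l ih =>
    by_cases hba : b = a
    · simp [List.idxOf_cons, hba]
    · have h1 : (f b == f a) = false := by simp [hf.ne hba]
      have h2 : (b == a) = false := by simp [hba]
      simp [List.idxOf_cons, h1, h2, ih]

end idx

lemma key (hn : 2 ≤ n) (w : Equiv.Perm (Fin n)) :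
    (w.SameCycle ⟨0, lt_of_lt_of_le two_pos hn⟩ ⟨n - 1, Nat.sub_lt (lt_of_lt_of_le two_pos hn) one_pos⟩ →
      List.idxOf (⟨n - 1, Nat.sub_lt (lt_of_lt_of_le two_pos hn) one_pos⟩ : Fin n) (foataWord w) <
        List.idxOf (⟨0, lt_of_lt_of_le two_pos hn⟩ : Fin n) (foataWord w)) ∧
    (¬ w.SameCycle ⟨0, lt_of_lt_of_le two_pos hn⟩ ⟨n - 1, Nat.sub_lt (lt_of_lt_of_le two_pos hn) one_pos⟩ →
      List.idxOf (⟨0, lt_of_lt_of_le two_pos hn⟩ : Fin n) (foataWord w) <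
        List.idxOf (⟨n - 1, Nat.sub_lt (lt_of_lt_of_le two_pos hn) one_pos⟩ : Fin n) (foataWord w)) := by
  set z0 : Fin n := ⟨0, by omega⟩ with hz0
  set zm : Fin n := ⟨n - 1, by omega⟩ with hzm
  have hne : z0 ≠ zm := by
    intro h
    have := congrArg Fin.val h
    simp [hz0, hzm] at this
    omega
  obtain ⟨front, t, hsplit, hfront, hback⟩ := foata_split (by omega) w
  have hmf : zm ∉ front := fun hin => hfront zm hin (Equiv.Perm.SameCycle.refl w zm)
  constructor
  · intro h
    have h0f : z0 ∉ front := fun hin => hfront z0 hin h.symm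
    rw [hsplit, idx_append_right _ hmf, idx_append_right _ h0f, idx_cons_self,
      idx_cons_ne _ hne.symm]
    omega
  · intro h
    have h0f : z0 ∈ front := by
      have hmem := mem_foataWord w z0
      rw [hsplit] at hmem
      rcases List.mem_append.1 hmem with h1 | h1
      · exact h1
      · exact absurd (hback z0 h1).symm h
    rw [hsplit, idx_append_left _ h0f, idx_append_right _ hmf, idx_cons_self]
    have := List.idxOf_lt_length_iff.2 h0f
    omega

end FoataAux

namespace FoataAux

variable {n : ℕ}

lemma rev_z0 (hn : 2 ≤ n) : Fin.rev (⟨0, lt_of_lt_of_le two_pos hn⟩ : Fin n) = ⟨n - 1, Nat.sub_lt (lt_of_lt_of_le two_pos hn) one_pos⟩ := by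
  apply Fin.ext
  simp [Fin.val_rev]

lemma rev_zm (hn : 2 ≤ n) : Fin.rev (⟨n - 1, Nat.sub_lt (lt_of_lt_of_le two_pos hn) one_pos⟩ : Fin n) = ⟨0, lt_of_lt_of_le two_pos hn⟩ := by
  apply Fin.ext
  simp [Fin.val_rev]
  omega

lemma gamma_flip (hn : 2 ≤ n) {w w' : Equiv.Perm (Fin n)} (h : IsGamma w w') :
    (w.SameCycle ⟨0, lt_of_lt_of_le two_pos hn⟩ ⟨n - 1, Nat.sub_lt (lt_of_lt_of_le two_pos hn) one_pos⟩ ↔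
      ¬ w'.SameCycle ⟨0, lt_of_lt_of_le two_pos hn⟩ ⟨n - 1, Nat.sub_lt (lt_of_lt_of_le two_pos hn) one_pos⟩) := by
  have k1 := key hn w
  have k2 := key hn w'⁻¹
  have e1 : List.idxOf (⟨n - 1, by omega⟩ : Fin n) (foataWord w'⁻¹) =
      List.idxOf (⟨0, by omega⟩ : Fin n) (foataWord w) := by
    rw [h, ← rev_z0 hn, idx_map Fin.rev_injective]
  have e2 : List.idxOf (⟨0, by omega⟩ : Fin n) (foataWord w'⁻¹) =
      List.idxOf (⟨n - 1, by omega⟩ : Fin n) (foataWord w) := by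
    rw [h, ← rev_zm hn, idx_map Fin.rev_injective]
  rw [e1, e2] at k2
  constructor
  · intro hsc hsc'
    have h1 := k1.1 hsc
    have h2 := k2.1 (Equiv.Perm.sameCycle_inv.2 hsc')
    omega
  · intro hns
    by_contra hsc
    have h1 := k1.2 hsc
    have h2 := k2.2 (fun hx => hns (Equiv.Perm.sameCycle_inv.1 hx))
    omega

lemma sum_even_ind (m : ℕ) :
    (∑ k ∈ Finset.range (m + m), (if Even k then (1 : ℚ) else 0)) = m ∧
    (∑ k ∈ Finset.range (m + m), (if ¬ Even k then (1 : ℚ) else 0)) = m := by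
  induction m with
  | zero => simp
  | succ m ih =>
    have h1 : m + 1 + (m + 1) = (m + m) + 1 + 1 := by ring
    have he : Even (m + m) := ⟨m, rfl⟩
    have ho : ¬ Even (m + m + 1) := by simp [Nat.even_add_one, he]
    constructor
    · rw [h1, Finset.sum_range_succ, Finset.sum_range_succ, ih.1, if_pos he, if_neg ho]
      push_cast
      ring
    · rw [h1, Finset.sum_range_succ, Finset.sum_range_succ, ih.2, if_neg (not_not_intro he),
        if_pos ho]
      push_cast
      ring

end FoataAux

/-- For `γ = I ∘ F⁻¹ ∘ C ∘ F` on `S_n` with `n ≥ 2`: the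
elements `1` and `n` lie in the same cycle of `w` iff they lie in different
cycles of `γ(w)`.  Consequently every `γ`-orbit has even size, and the
indicator of `1` and `n` being in the same cycle is `(1/2)`-mesic. -/
theorem gamma_sameCycle (n : ℕ) (hn : 2 ≤ n)
    (γ : Equiv.Perm (Fin n) → Equiv.Perm (Fin n))
    (hγ : ∀ w, IsGamma w (γ w)) :
    (∀ w : Equiv.Perm (Fin n),
        w.SameCycle ⟨0, by omega⟩ ⟨n - 1, by omega⟩ ↔
          ¬ (γ w).SameCycle ⟨0, by omega⟩ ⟨n - 1, by omega⟩) ∧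
    (∀ w : Equiv.Perm (Fin n), Even (Function.minimalPeriod γ w)) ∧
    (∀ w : Equiv.Perm (Fin n),
        ∑ k ∈ Finset.range (Function.minimalPeriod γ w),
            (if (γ^[k] w).SameCycle ⟨0, by omega⟩ ⟨n - 1, by omega⟩
              then (1 : ℚ) else 0) =
          (Function.minimalPeriod γ w : ℚ) / 2) := by
  have flip : ∀ w : Equiv.Perm (Fin n),
      w.SameCycle ⟨0, by omega⟩ ⟨n - 1, by omega⟩ ↔
        ¬ (γ w).SameCycle ⟨0, by omega⟩ ⟨n - 1, by omega⟩ :=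
    fun w => FoataAux.gamma_flip hn (hγ w)
  have hpk : ∀ (w : Equiv.Perm (Fin n)) (k : ℕ),
      (γ^[k] w).SameCycle ⟨0, by omega⟩ ⟨n - 1, by omega⟩ ↔
        (Even k ↔ w.SameCycle ⟨0, by omega⟩ ⟨n - 1, by omega⟩) := by
    intro w k
    induction k with
    | zero => simp
    | succ k ih =>
      rw [Function.iterate_succ_apply']
      have h1 := flip (γ^[k] w)
      rw [ih] at h1
      rw [Nat.even_add_one]
      tauto
  have heven : ∀ w : Equiv.Perm (Fin n), Even (Function.minimalPeriod γ w) := by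
    intro w
    have hp : γ^[Function.minimalPeriod γ w] w = w := Function.iterate_minimalPeriod
    have h2 := hpk w (Function.minimalPeriod γ w)
    rw [hp] at h2
    by_cases hP : w.SameCycle ⟨0, by omega⟩ ⟨n - 1, by omega⟩ <;> tauto
  refine ⟨flip, heven, ?_⟩
  intro w
  obtain ⟨m, hm⟩ := heven w
  rw [hm]
  have hterm : ∀ k ∈ Finset.range (m + m),
      (if (γ^[k] w).SameCycle ⟨0, by omega⟩ ⟨n - 1, by omega⟩ then (1 : ℚ) else 0) =
        (if (Even k ↔ w.SameCycle ⟨0, by omega⟩ ⟨n - 1, by omega⟩) then (1 : ℚ) else 0) :=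
    fun k _ => if_congr (hpk w k) rfl rfl
  rw [Finset.sum_congr rfl hterm]
  by_cases hP : w.SameCycle ⟨0, by omega⟩ ⟨n - 1, by omega⟩
  · have h3 : ∀ k ∈ Finset.range (m + m),
        (if (Even k ↔ w.SameCycle ⟨0, by omega⟩ ⟨n - 1, by omega⟩) then (1 : ℚ) else 0) =
          (if Even k then (1 : ℚ) else 0) :=
      fun k _ => if_congr (by tauto) rfl rfl
    rw [Finset.sum_congr rfl h3, (FoataAux.sum_even_ind m).1]
    push_cast
    ring
  · have h3 : ∀ k ∈ Finset.range (m + m),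
        (if (Even k ↔ w.SameCycle ⟨0, by omega⟩ ⟨n - 1, by omega⟩) then (1 : ℚ) else 0) =
          (if ¬ Even k then (1 : ℚ) else 0) :=
      fun k _ => if_congr (by tauto) rfl rfl
    rw [Finset.sum_congr rfl h3, (FoataAux.sum_even_ind m).2]
    push_cast
    ring
end

section
/- If w = A n (in one-line notation, with the maximum n in the last position and A nonempty), then the φ-orbit of w has size exactly twice the size of the φ-orbit of A, where φ = F ∘ I ∘ F^{-1} ∘ R. -/
/-- Standardization of a word `L` with distinct entries: replace each entry by
its rank (number of entries of `L` smaller than it), giving the one-line word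
of a permutation of `Fin L.length` via the canonical order-isomorphism. -/
def stdz (L : List ℕ) : List ℕ :=
  L.map fun x => (L.filter fun y => decide (y < x)).length

namespace Foata
variable {n : ℕ}
open Function List Equiv

noncomputable def per (w : Equiv.Perm (Fin n)) (x : Fin n) : ℕ := Function.minimalPeriod (⇑w) x

lemma pow_apply_eq_iterate (w : Equiv.Perm (Fin n)) (k : ℕ) (x : Fin n) :
    (w ^ k) x = (⇑w)^[k] x := by rw [Equiv.Perm.iterate_eq_pow]

lemma isPeriodicPt_per (w : Equiv.Perm (Fin n)) (x : Fin n) :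
    Function.IsPeriodicPt (⇑w) (per w x) x := Function.isPeriodicPt_minimalPeriod _ _

lemma pow_per (w : Equiv.Perm (Fin n)) (x : Fin n) : (w ^ per w x) x = x := by
  have h := isPeriodicPt_per w x
  rwa [Function.IsPeriodicPt, Function.IsFixedPt, ← pow_apply_eq_iterate] at h

lemma per_pos (w : Equiv.Perm (Fin n)) (x : Fin n) : 0 < per w x := by
  have h : Function.IsPeriodicPt (⇑w) (orderOf w) x := by
    unfold Function.IsPeriodicPt Function.IsFixedPt
    rw [Equiv.Perm.iterate_eq_pow, pow_orderOf_eq_one]; rfl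
  exact h.minimalPeriod_pos (orderOf_pos w)

lemma pow_inj_lt_per (w : Equiv.Perm (Fin n)) (x : Fin n) {i j : ℕ}
    (hi : i < per w x) (hj : j < per w x) (h : (w ^ i) x = (w ^ j) x) : i = j := by
  wlog hij : i ≤ j generalizing i j
  · exact (this hj hi h.symm (le_of_not_ge hij)).symm
  rcases Nat.eq_or_lt_of_le hij with rfl | hlt
  · rfl
  exfalso
  have hper : Function.IsPeriodicPt (⇑w) (j - i) x := by
    unfold Function.IsPeriodicPt Function.IsFixedPt
    have : (w ^ i) ((w ^ (j - i)) x) = (w ^ i) x := by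
      rw [← Equiv.Perm.mul_apply, ← pow_add, Nat.add_sub_cancel' hij, h]  -- careful direction
    have h2 : (w ^ (j - i)) x = x := (w ^ i).injective this
    rw [← pow_apply_eq_iterate]; exact h2
  have := hper.minimalPeriod_le (Nat.sub_pos_of_lt hlt)
  have hlt2 : j - i < per w x := lt_of_le_of_lt (Nat.sub_le _ _) hj
  exact absurd this (by unfold per at *; omega)

lemma cyc_eq (w : Equiv.Perm (Fin n)) (x : Fin n) :
    cyc w x = (List.range (per w x)).map (fun j => (w ^ j) x) := by
  have per_le : per w x ≤ n := by
    by_contra hle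
    push_neg at hle
    -- injective map Fin (per) → Fin n gives per ≤ n
    have : Function.Injective (fun j : Fin (per w x) => (w ^ (j : ℕ)) x) := by
      intro i j h
      exact Fin.ext (pow_inj_lt_per w x i.2 j.2 h)
    have := Fintype.card_le_of_injective _ this
    simp at this; omega
  have key : ∀ k, k ≤ n →
      (List.range k).foldl (fun acc j => if (w ^ j) x ∈ acc then acc else acc ++ [(w ^ j) x]) []
      = (List.range (min k (per w x))).map (fun j => (w ^ j) x) := by
    intro k hk
    induction k with
    | zero => simp
    | succ k ih =>
      rw [List.range_succ, List.foldl_append, ih (by omega)]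
      simp only [List.foldl_cons, List.foldl_nil]
      by_cases hkp : k < per w x
      · rw [if_neg, Nat.min_eq_left (by omega), Nat.min_eq_left (by omega), List.range_succ,
          List.map_append]
        · simp
        · simp only [List.mem_map, List.mem_range, Nat.min_eq_left hkp.le]
          rintro ⟨j, hj, hje⟩
          exact absurd (pow_inj_lt_per w x (by omega) hkp hje) (by omega)
      · push_neg at hkp
        rw [if_pos, Nat.min_eq_right (by omega), Nat.min_eq_right (by omega)]
        have hp := per_pos w x
        have hmem : k % per w x < min k (per w x) := by
          have := Nat.mod_lt k hp; omega
        have : (w ^ k) x = (w ^ (k % per w x)) x := by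
          rw [pow_apply_eq_iterate, pow_apply_eq_iterate]
          exact ((isPeriodicPt_per w x).iterate_mod_apply k).symm
        rw [this]
        exact List.mem_map.2 ⟨k % per w x, List.mem_range.2 hmem, rfl⟩
  have := key n le_rfl
  rw [cyc, this, Nat.min_eq_right per_le]

lemma cyc_nodup (w : Equiv.Perm (Fin n)) (x : Fin n) : (cyc w x).Nodup := by
  rw [cyc_eq]
  refine List.Nodup.map_on ?_ List.nodup_range
  intro i hi j hj h
  exact pow_inj_lt_per w x (List.mem_range.1 hi) (List.mem_range.1 hj) h

lemma cyc_length (w : Equiv.Perm (Fin n)) (x : Fin n) : (cyc w x).length = per w x := by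
  rw [cyc_eq]; simp

lemma mem_cyc_iff {w : Equiv.Perm (Fin n)} {x y : Fin n} :
    y ∈ cyc w x ↔ w.SameCycle x y := by
  rw [cyc_eq]
  simp only [List.mem_map, List.mem_range]
  constructor
  · rintro ⟨j, _, rfl⟩
    exact ⟨(j : ℤ), by simp [zpow_natCast]⟩
  · intro h
    obtain ⟨i, _, _, hi⟩ := h.exists_pow_eq w
    refine ⟨i % per w x, Nat.mod_lt _ (per_pos w x), ?_⟩
    rw [pow_apply_eq_iterate, (isPeriodicPt_per w x).iterate_mod_apply,
      ← pow_apply_eq_iterate, hi]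

lemma self_mem_cyc (w : Equiv.Perm (Fin n)) (x : Fin n) : x ∈ cyc w x :=
  mem_cyc_iff.2 (Equiv.Perm.SameCycle.refl w x)

lemma cyc_cons (w : Equiv.Perm (Fin n)) (x : Fin n) :
    ∃ t, cyc w x = x :: t := by
  rw [cyc_eq]
  obtain ⟨k, hk⟩ := Nat.exists_eq_succ_of_ne_zero (per_pos w x).ne'
  rw [hk, List.range_succ_eq_map, List.map_cons]
  exact ⟨_, by rw [pow_zero]; rfl⟩

lemma cyc_getElem (w : Equiv.Perm (Fin n)) (x : Fin n) (j : ℕ) (h : j < (cyc w x).length) :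
    (cyc w x)[j] = (w ^ j) x := by
  have h' : j < per w x := by rwa [cyc_length] at h
  simp only [cyc_eq]
  simp [h']

lemma per_congr_of_iff {α β : Type*} (f : α → α) (g : β → β) (x : α) (y : β)
    (h : ∀ k, Function.IsPeriodicPt f k x ↔ Function.IsPeriodicPt g k y)
    (hf : 0 < Function.minimalPeriod f x) (hg : 0 < Function.minimalPeriod g y) :
    Function.minimalPeriod f x = Function.minimalPeriod g y := by
  have h1 := ((h _).1 (Function.isPeriodicPt_minimalPeriod f x)).minimalPeriod_le hf
  have h2 := ((h _).2 (Function.isPeriodicPt_minimalPeriod g y)).minimalPeriod_le hg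
  omega

lemma per_inv (w : Equiv.Perm (Fin n)) (x : Fin n) : per w⁻¹ x = per w x := by
  refine per_congr_of_iff _ _ _ _ (fun k => ?_) (per_pos w⁻¹ x) (per_pos w x)
  unfold Function.IsPeriodicPt Function.IsFixedPt
  rw [← pow_apply_eq_iterate, ← pow_apply_eq_iterate, inv_pow]
  constructor
  · intro h; conv_lhs => rw [← h]
    simp
  · intro h; conv_lhs => rw [← h]
    simp

lemma mem_cyc_inv_iff {w : Equiv.Perm (Fin n)} {x y : Fin n} :
    y ∈ cyc w⁻¹ x ↔ y ∈ cyc w x := by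
  rw [mem_cyc_iff, mem_cyc_iff, Equiv.Perm.sameCycle_inv]



def leaders (w : Equiv.Perm (Fin n)) : List (Fin n) :=
  (List.finRange n).filter (fun x => decide (∀ y ∈ cyc w x, y ≤ x))

lemma foataWord_eq (w : Equiv.Perm (Fin n)) : foataWord w = (leaders w).flatMap (cyc w) := rfl

lemma mem_leaders_iff {w : Equiv.Perm (Fin n)} {x : Fin n} :
    x ∈ leaders w ↔ ∀ y ∈ cyc w x, y ≤ x := by
  simp [leaders, List.mem_filter]

lemma leaders_pairwise (w : Equiv.Perm (Fin n)) : (leaders w).Pairwise (· < ·) := by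
  have h : (List.finRange n).Pairwise (· < ·) := by
    rw [List.pairwise_iff_get]
    intro i j hij
    simpa using hij
  exact h.filter _

lemma leaders_eq_of_sameCycle {w : Equiv.Perm (Fin n)} {x y : Fin n}
    (hx : x ∈ leaders w) (hy : y ∈ leaders w) (h : w.SameCycle x y) : x = y := by
  have h1 : y ≤ x := (mem_leaders_iff.1 hx) y (mem_cyc_iff.2 h)
  have h2 : x ≤ y := (mem_leaders_iff.1 hy) x (mem_cyc_iff.2 h.symm)
  exact le_antisymm h2 h1

lemma exists_leader (w : Equiv.Perm (Fin n)) (z : Fin n) :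
    ∃ x ∈ leaders w, z ∈ cyc w x := by
  have hne : (cyc w z).toFinset.Nonempty := ⟨z, List.mem_toFinset.2 (self_mem_cyc w z)⟩
  set x := (cyc w z).toFinset.max' hne with hx
  have hxmem : x ∈ cyc w z := List.mem_toFinset.1 ((cyc w z).toFinset.max'_mem hne)
  have hsc : w.SameCycle z x := mem_cyc_iff.1 hxmem
  refine ⟨x, ?_, mem_cyc_iff.2 hsc.symm⟩
  rw [mem_leaders_iff]
  intro y hy
  have : w.SameCycle z y := hsc.trans (mem_cyc_iff.1 hy)
  exact Finset.le_max' _ _ (List.mem_toFinset.2 (mem_cyc_iff.2 this))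

lemma foataWord_nodup (w : Equiv.Perm (Fin n)) : (foataWord w).Nodup := by
  rw [foataWord_eq, List.nodup_flatMap]
  refine ⟨fun x _ => cyc_nodup w x, ?_⟩
  refine ((leaders_pairwise w).imp_of_mem ?_)
  intro a b ha hb hab
  intro z hza hzb
  have : a = b := leaders_eq_of_sameCycle ha hb
    ((mem_cyc_iff.1 hza).trans (mem_cyc_iff.1 hzb).symm)
  exact absurd this hab.ne

lemma mem_foataWord (w : Equiv.Perm (Fin n)) (z : Fin n) : z ∈ foataWord w := by
  obtain ⟨x, hx, hz⟩ := exists_leader w z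
  rw [foataWord_eq, List.mem_flatMap]
  exact ⟨x, hx, hz⟩

lemma foataWord_length (w : Equiv.Perm (Fin n)) : (foataWord w).length = n := by
  have h1 : (foataWord w).toFinset = Finset.univ :=
    Finset.eq_univ_iff_forall.2 (fun z => List.mem_toFinset.2 (mem_foataWord w z))
  have h2 := List.toFinset_card_of_nodup (foataWord_nodup w)
  rw [h1] at h2
  simp at h2
  omega

lemma leaders_inv (w : Equiv.Perm (Fin n)) : leaders w⁻¹ = leaders w := by
  unfold leaders
  refine List.filter_congr (fun x _ => ?_)
  simp only [decide_eq_decide]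
  constructor
  · intro h y hy; exact h y (mem_cyc_inv_iff.2 hy)
  · intro h y hy; exact h y (mem_cyc_inv_iff.1 hy)



lemma takeWhile_all {α : Type*} (p : α → Bool) (t r : List α) (h : ∀ a ∈ t, p a = true) :
    (t ++ r).takeWhile p = t ++ r.takeWhile p := by
  induction t with
  | nil => simp
  | cons a t ih =>
    simp only [List.cons_append, List.takeWhile_cons, h a List.mem_cons_self]
    rw [ih (fun b hb => h b (List.mem_cons_of_mem a hb))]
    simp

lemma mem_cyc_exists {w : Equiv.Perm (Fin n)} {x z : Fin n} (h : z ∈ cyc w x) :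
    ∃ j < per w x, (w ^ j) x = z := by
  rw [cyc_eq] at h
  simp only [List.mem_map, List.mem_range] at h
  obtain ⟨j, hj, hje⟩ := h
  exact ⟨j, hj, hje⟩

lemma cyc_apply_det {u₁ u₂ : Equiv.Perm (Fin n)} {x : Fin n}
    (h : cyc u₁ x = cyc u₂ x) {z : Fin n} (hz : z ∈ cyc u₁ x) : u₁ z = u₂ z := by
  have hp : per u₁ x = per u₂ x := by
    rw [← cyc_length u₁ x, ← cyc_length u₂ x, h]
  obtain ⟨j, hj, hje⟩ := mem_cyc_exists hz
  obtain ⟨i, hi, hie⟩ := mem_cyc_exists (h ▸ hz)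
  have hij : i = j := by
    have e1 : (cyc u₁ x)[j]'(by rw [cyc_length]; exact hj) = z := by
      rw [cyc_getElem]; exact hje
    have e2 : (cyc u₁ x)[i]'(by rw [cyc_length, hp]; exact hi) = z :=
      (List.getElem_of_eq h _).trans (by rw [cyc_getElem]; exact hie)
    have := (List.Nodup.getElem_inj_iff (cyc_nodup u₁ x)).1 (e2.trans e1.symm)
    exact this
  subst hij
  have e₁ : u₁ z = (u₁ ^ (i + 1)) x := by rw [← hje, ← Equiv.Perm.mul_apply, ← pow_succ']
  have e₂ : u₂ z = (u₂ ^ (i + 1)) x := by rw [← hie, ← Equiv.Perm.mul_apply, ← pow_succ']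
  rcases Nat.lt_or_ge (i+1) (per u₁ x) with hlt | hge
  · have g1 := cyc_getElem u₁ x (i+1) (by rw [cyc_length]; exact hlt)
    have g2 := cyc_getElem u₂ x (i+1) (by rw [cyc_length, ← hp]; exact hlt)
    rw [e₁, e₂, ← g1, ← g2]
    exact List.getElem_of_eq h _
  · have hpe : i + 1 = per u₁ x := by omega
    rw [e₁, e₂, hpe, pow_per u₁ x, hp, pow_per u₂ x]

lemma head_lt_of_leader {w : Equiv.Perm (Fin n)} {x : Fin n}
    (hx : ∀ y ∈ cyc w x, y ≤ x) (hnd : (cyc w x).Nodup) :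
    ∀ z ∈ (cyc w x).tail, z < x := by
  obtain ⟨t, ht⟩ := cyc_cons w x
  intro z hz
  rw [ht] at hz hnd hx
  simp only [List.tail_cons] at hz
  have hne : z ≠ x := fun h => (List.nodup_cons.1 hnd).1 (h ▸ hz)
  exact lt_of_le_of_ne (hx z (List.mem_cons_of_mem x hz)) hne

/-- the key determinism lemma -/

lemma spec_determines :
    ∀ (S₁ : List (Fin n)) (L : List (Fin n)) (u₁ u₂ : Equiv.Perm (Fin n)) (S₂ : List (Fin n)),
    L.Nodup →
    L = S₁.flatMap (cyc u₁) → S₁.Pairwise (· < ·) → (∀ x ∈ S₁, ∀ y ∈ cyc u₁ x, y ≤ x) →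
    L = S₂.flatMap (cyc u₂) → S₂.Pairwise (· < ·) → (∀ x ∈ S₂, ∀ y ∈ cyc u₂ x, y ≤ x) →
    ∀ z ∈ L, u₁ z = u₂ z := by
  intro S₁
  induction S₁ with
  | nil =>
    intro L u₁ u₂ S₂ _ h1 _ _ _ _ _ z hz
    rw [h1] at hz; simp at hz
  | cons x₁ T₁ ih =>
    intro L u₁ u₂ S₂ hnd h1 hp1 hl1 h2 hp2 hl2 z hz
    -- L is nonempty with head x₁
    obtain ⟨t₁, ht₁⟩ := cyc_cons u₁ x₁
    have hL1 : L = (x₁ :: t₁) ++ T₁.flatMap (cyc u₁) := by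
      rw [h1, List.flatMap_cons, ht₁]
    -- S₂ nonempty
    obtain ⟨x₂, T₂, rfl⟩ : ∃ x₂ T₂, S₂ = x₂ :: T₂ := by
      rcases S₂ with _ | ⟨x₂, T₂⟩
      · exfalso
        have : x₁ ∈ L := by rw [hL1]; simp
        rw [h2] at this; simp at this
      · exact ⟨x₂, T₂, rfl⟩
    obtain ⟨t₂, ht₂⟩ := cyc_cons u₂ x₂
    have hL2 : L = (x₂ :: t₂) ++ T₂.flatMap (cyc u₂) := by
      rw [h2, List.flatMap_cons, ht₂]
    have hx12 : x₁ = x₂ := by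
      have := hL1.symm.trans hL2
      simpa using congrArg List.head? this
    subst hx12
    -- block characterization by takeWhile
    have block_char : ∀ (u : Equiv.Perm (Fin n)) (T : List (Fin n)),
        L = cyc u x₁ ++ T.flatMap (cyc u) → ((x₁ :: T).Pairwise (· < ·)) →
        (∀ x ∈ x₁ :: T, ∀ y ∈ cyc u x, y ≤ x) →
        cyc u x₁ = x₁ :: L.tail.takeWhile (fun y => decide (y < x₁)) := by
      intro u T hLu hpu hlu
      obtain ⟨t, ht⟩ := cyc_cons u x₁
      have htail : L.tail = t ++ T.flatMap (cyc u) := by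
        rw [hLu, ht]; simp
      have hta : ∀ a ∈ t, (decide (a < x₁)) = true := by
        intro a ha
        have : a < x₁ := by
          have hnd' : (cyc u x₁).Nodup := cyc_nodup u x₁
          have := head_lt_of_leader (hlu x₁ List.mem_cons_self) hnd'
          apply this
          rw [ht]; simpa using ha
        simpa using this
      rw [htail, takeWhile_all _ _ _ hta, ht]
      congr 1
      -- takeWhile on the rest is []
      rcases hT : T.flatMap (cyc u) with _ | ⟨b, r⟩
      · simp
      · have hb : ¬ (b < x₁) := by
          -- b is head of first block of T
          rcases T with _ | ⟨y, T'⟩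
          · simp at hT
          · obtain ⟨ty, hty⟩ := cyc_cons u y
            have hby : b = y := by
              have he : (y :: T').flatMap (cyc u) = y :: (ty ++ T'.flatMap (cyc u)) := by
                rw [List.flatMap_cons, hty]; simp
              rw [he] at hT
              exact ((List.cons_eq_cons.1 hT).1).symm
            rw [hby]
            have hxy : x₁ < y := (List.pairwise_cons.1 hpu).1 y List.mem_cons_self
            exact fun hc => absurd (hc.trans hxy) (lt_irrefl _)
        simp [hb]
    have hb1 := block_char u₁ T₁ (by rw [h1, List.flatMap_cons]) hp1 hl1
    have hb2 := block_char u₂ T₂ (by rw [h2, List.flatMap_cons]) hp2 hl2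
    have hcyc : cyc u₁ x₁ = cyc u₂ x₁ := hb1.trans hb2.symm
    -- rests are equal
    have hrest : T₁.flatMap (cyc u₁) = T₂.flatMap (cyc u₂) := by
      have e : cyc u₁ x₁ ++ T₁.flatMap (cyc u₁) = cyc u₂ x₁ ++ T₂.flatMap (cyc u₂) := by
        rw [← List.flatMap_cons, ← List.flatMap_cons, ← h1, ← h2]
      rw [← hcyc] at e
      exact List.append_cancel_left e
    by_cases hzc : z ∈ cyc u₁ x₁
    · exact cyc_apply_det hcyc hzc
    · have hzr : z ∈ T₁.flatMap (cyc u₁) := by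
        rw [h1, List.flatMap_cons] at hz
        rcases List.mem_append.1 hz with h | h
        · exact absurd h hzc
        · exact h
      have hndr : (T₁.flatMap (cyc u₁)).Nodup := by
        rw [h1, List.flatMap_cons] at hnd
        exact (List.nodup_append.1 hnd).2.1
      exact ih _ u₁ u₂ T₂ hndr rfl (List.pairwise_cons.1 hp1).2
        (fun x hx => hl1 x (List.mem_cons_of_mem _ hx)) hrest (List.pairwise_cons.1 hp2).2
        (fun x hx => hl2 x (List.mem_cons_of_mem _ hx)) z hzr

lemma foataWord_injective : Function.Injective (foataWord (n := n)) := by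
  intro u₁ u₂ h
  apply Equiv.ext
  intro z
  exact spec_determines (leaders u₁) (foataWord u₁) u₁ u₂ (leaders u₂)
    (foataWord_nodup u₁) (foataWord_eq u₁) (leaders_pairwise u₁)
    (fun x hx => mem_leaders_iff.1 hx) (h.trans (foataWord_eq u₂)) (leaders_pairwise u₂)
    (fun x hx => mem_leaders_iff.1 hx) z (mem_foataWord u₁ z)



lemma foataWord_eq' (w : Equiv.Perm (Fin n)) : foataWord w = (leaders w).flatMap (cyc w) := rfl

/-- extend a permutation of `Fin m` to `Fin (m+1)` fixing the last element -/

def ext (r : Equiv.Perm (Fin m)) : Equiv.Perm (Fin (m + 1)) where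
  toFun := Fin.lastCases (Fin.last m) (fun y => (r y).castSucc)
  invFun := Fin.lastCases (Fin.last m) (fun y => (r⁻¹ y).castSucc)
  left_inv := by
    intro x
    cases x using Fin.lastCases with
    | last => simp
    | cast y => simp
  right_inv := by
    intro x
    cases x using Fin.lastCases with
    | last => simp
    | cast y => simp

@[simp] lemma ext_castSucc (r : Equiv.Perm (Fin m)) (y : Fin m) :
    ext r y.castSucc = (r y).castSucc := by simp [ext]

@[simp] lemma ext_last (r : Equiv.Perm (Fin m)) : ext r (Fin.last m) = Fin.last m := by
  simp [ext]

lemma ext_pow_castSucc (r : Equiv.Perm (Fin m)) (k : ℕ) (y : Fin m) :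
    (ext r ^ k) y.castSucc = ((r ^ k) y).castSucc := by
  induction k with
  | zero => simp
  | succ k ih => rw [pow_succ', pow_succ', Equiv.Perm.mul_apply, Equiv.Perm.mul_apply, ih,
      ext_castSucc]

lemma ext_pow_last (r : Equiv.Perm (Fin m)) (k : ℕ) :
    (ext r ^ k) (Fin.last m) = Fin.last m := by
  induction k with
  | zero => simp
  | succ k ih => rw [pow_succ', Equiv.Perm.mul_apply, ih, ext_last]

lemma ext_inv (r : Equiv.Perm (Fin m)) : (ext r)⁻¹ = ext r⁻¹ := by
  apply Equiv.ext
  intro x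
  rw [Equiv.Perm.inv_eq_iff_eq]
  cases x using Fin.lastCases with
  | last => simp
  | cast y => simp

lemma ext_injective : Function.Injective (ext (m := m)) := by
  intro r s h
  apply Equiv.ext
  intro y
  have := congrArg (fun p => p y.castSucc) (congrArg (fun e => e.toFun) h)
  simpa using this

lemma per_ext_castSucc (r : Equiv.Perm (Fin m)) (y : Fin m) :
    per (ext r) y.castSucc = per r y := by
  refine per_congr_of_iff _ _ _ _ (fun k => ?_) (per_pos _ _) (per_pos _ _)
  unfold Function.IsPeriodicPt Function.IsFixedPt
  rw [← pow_apply_eq_iterate, ← pow_apply_eq_iterate, ext_pow_castSucc]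
  exact ⟨fun h => Fin.castSucc_injective m h, fun h => by rw [h]⟩

lemma per_ext_last (r : Equiv.Perm (Fin m)) : per (ext r) (Fin.last m) = 1 := by
  have h1 : Function.IsPeriodicPt (⇑(ext r)) 1 (Fin.last m) := by
    unfold Function.IsPeriodicPt Function.IsFixedPt
    rw [← pow_apply_eq_iterate, pow_one, ext_last]
  have := h1.minimalPeriod_le Nat.one_pos
  have := per_pos (ext r) (Fin.last m)
  unfold per at *
  omega

lemma cyc_ext_castSucc (r : Equiv.Perm (Fin m)) (y : Fin m) :
    cyc (ext r) y.castSucc = (cyc r y).map Fin.castSucc := by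
  rw [cyc_eq, cyc_eq, per_ext_castSucc, List.map_map]
  refine List.map_congr_left (fun j _ => ?_)
  simp [ext_pow_castSucc]

lemma cyc_ext_last (r : Equiv.Perm (Fin m)) : cyc (ext r) (Fin.last m) = [Fin.last m] := by
  rw [cyc_eq, per_ext_last, show List.range 1 = [0] from rfl]
  simp

lemma finRange_succ_last : List.finRange (m + 1) = (List.finRange m).map Fin.castSucc ++ [Fin.last m] := by
  apply List.ext_getElem
  · simp
  · intro i h1 h2
    simp only [List.getElem_finRange, List.getElem_append, List.getElem_map]
    by_cases hi : i < m
    · simp [hi, List.getElem_finRange, Fin.ext_iff]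
    · have : i = m := by simp at h1; omega
      subst this
      simp [Fin.ext_iff]

lemma leaders_ext (r : Equiv.Perm (Fin m)) :
    leaders (ext r) = (leaders r).map Fin.castSucc ++ [Fin.last m] := by
  unfold leaders
  rw [finRange_succ_last, List.filter_append, List.filter_map]
  congr 1
  · refine congrArg (List.map Fin.castSucc) (List.filter_congr (fun y _ => ?_))
    simp only [Function.comp_apply, decide_eq_decide, cyc_ext_castSucc, List.mem_map]
    constructor
    · intro h z hz
      have := h z.castSucc ⟨z, hz, rfl⟩
      exact (Fin.castSucc_le_castSucc_iff).1 this
    · rintro h z ⟨z', hz', rfl⟩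
      exact (Fin.castSucc_le_castSucc_iff).2 (h z' hz')
  · rw [List.filter_cons]
    simp [cyc_ext_last, Fin.le_last]

lemma foataWord_ext (r : Equiv.Perm (Fin m)) :
    foataWord (ext r) = (foataWord r).map Fin.castSucc ++ [Fin.last m] := by
  rw [foataWord_eq', leaders_ext, List.flatMap_append, foataWord_eq', List.map_flatMap]
  congr 1
  · rw [List.flatMap_map]
    exact List.flatMap_congr (fun a _ => cyc_ext_castSucc r a)
  · simp [cyc_ext_last]



lemma leaders_eq_single {u : Equiv.Perm (Fin (m + 1))} {L : List (Fin (m + 1))}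
    (h : foataWord u = Fin.last m :: L) : leaders u = [Fin.last m] := by
  have hmem : Fin.last m ∈ leaders u := mem_leaders_iff.2 (fun y _ => Fin.le_last y)
  rcases hl : leaders u with _ | ⟨x₀, T⟩
  · rw [hl] at hmem; simp at hmem
  · obtain ⟨t, ht⟩ := cyc_cons u x₀
    have hw : foataWord u = x₀ :: (t ++ T.flatMap (cyc u)) := by
      rw [foataWord_eq', hl, List.flatMap_cons, ht]; simp
    have hx₀ : x₀ = Fin.last m := by
      rw [h] at hw
      exact ((List.cons_eq_cons.1 hw).1).symm
    subst hx₀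
    have hT : T = [] := by
      rcases T with _ | ⟨y, T'⟩
      · rfl
      · exfalso
        have hp := leaders_pairwise u
        rw [hl] at hp
        have hlt : Fin.last m < y := (List.pairwise_cons.1 hp).1 y List.mem_cons_self
        exact absurd hlt (not_lt.2 (Fin.le_last y))
    rw [hT]

lemma claimA {u : Equiv.Perm (Fin (m + 1))} {L : List (Fin (m + 1))}
    (h : foataWord u = Fin.last m :: L) :
    foataWord u⁻¹ = Fin.last m :: L.reverse := by
  have hl := leaders_eq_single h
  have hcw : cyc u (Fin.last m) = Fin.last m :: L := by
    rw [foataWord_eq', hl] at h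
    simpa using h
  have hLlen : L.length = m := by
    have := foataWord_length u
    rw [h] at this
    simpa using this
  have hper : per u (Fin.last m) = m + 1 := by
    rw [← cyc_length, hcw]
    simp [hLlen]
  have hli : leaders u⁻¹ = [Fin.last m] := (leaders_inv u).trans hl
  have hw' : foataWord u⁻¹ = cyc u⁻¹ (Fin.last m) := by
    rw [foataWord_eq', hli]
    simp
  have hperi : per u⁻¹ (Fin.last m) = m + 1 := (per_inv u _).trans hper
  rw [hw']
  apply List.ext_getElem
  · rw [cyc_length, hperi]; simp [hLlen]
  · intro i h1 h2
    have hi : i < m + 1 := by rw [cyc_length, hperi] at h1; exact h1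
    rw [cyc_getElem _ _ i h1]
    rcases i with _ | j
    · simp [pow_zero]
    · have hj : j < m := by omega
      set d := m - 1 - j with hd
      have hdm : m - (j+1) = d := by omega
      have hdl : d < L.length := by omega
      -- identify the RHS entry
      have hrhs : (Fin.last m :: L.reverse)[j+1]'h2 = L[d]'hdl := by
        simp only [List.getElem_cons_succ]
        rw [List.getElem_reverse]
        congr 1
        omega
      rw [hrhs]
      -- L[d] = (u ^ (d+1)) last
      have hcycd : (u ^ (d + 1)) (Fin.last m) = L[d]'hdl := by
        have h3 : d + 1 < (cyc u (Fin.last m)).length := by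
          rw [cyc_length, hper]; omega
        have e1 := cyc_getElem u (Fin.last m) (d+1) h3
        have e2 : (cyc u (Fin.last m))[d+1]'h3 = (Fin.last m :: L)[d+1]'(by simp; omega) :=
          List.getElem_of_eq hcw _
        rw [← e1, e2]
        simp
      -- (u ^ (j+1)) (L[d]) = last
      have hkey : (u ^ (j + 1)) (L[d]'hdl) = Fin.last m := by
        rw [← hcycd, ← Equiv.Perm.mul_apply, ← pow_add]
        have he : j + 1 + (d + 1) = m + 1 := by omega
        rw [he]
        have hp2 := pow_per u (Fin.last m)
        rwa [hper] at hp2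
      -- conclude
      rw [inv_pow]
      exact (Equiv.Perm.inv_eq_iff_eq).2 hkey.symm

lemma oneLineF_getElem (w : Equiv.Perm (Fin n)) (i : ℕ) (h : i < (oneLineF w).length) :
    (oneLineF w)[i] = w ⟨i, by simpa [oneLineF] using h⟩ := by
  simp [oneLineF, List.getElem_finRange, Fin.ext_iff]

lemma oneLineF_length (w : Equiv.Perm (Fin n)) : (oneLineF w).length = n := by simp [oneLineF]

lemma oneLineF_injective : Function.Injective (oneLineF (n := n)) := by
  intro u v h
  apply Equiv.ext
  intro z
  have hz : z.val < (oneLineF u).length := by rw [oneLineF_length]; exact z.2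
  have hz' : z.val < (oneLineF v).length := by rw [oneLineF_length]; exact z.2
  have h1 := oneLineF_getElem u z.val hz
  have h2 := oneLineF_getElem v z.val hz'
  have h3 : (oneLineF u)[z.val]'hz = (oneLineF v)[z.val]'hz' := List.getElem_of_eq h _
  rw [h1, h2] at h3
  simpa using h3

lemma oneLineF_ext (r : Equiv.Perm (Fin m)) (e : Equiv.Perm (Fin (m+1)))
    (he : ∀ y : Fin m, e y.castSucc = (r y).castSucc) (hl : e (Fin.last m) = Fin.last m) :
    oneLineF e = (oneLineF r).map Fin.castSucc ++ [Fin.last m] := by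
  unfold oneLineF
  rw [show List.finRange (m + 1) = (List.finRange m).map Fin.castSucc ++ [Fin.last m] from ?_]
  · rw [List.map_append, List.map_map, List.map_map]
    congr 1
    · refine List.map_congr_left (fun y _ => ?_)
      simp [he]
    · simp [hl]
  · apply List.ext_getElem
    · simp
    · intro i h1 h2
      simp only [List.getElem_finRange, List.getElem_append, List.getElem_map]
      by_cases hi : i < m
      · simp [hi, List.getElem_finRange, Fin.ext_iff]
      · have : i = m := by simp at h1; omega
        subst this
        simp [Fin.ext_iff]



lemma step1 {m : ℕ} (φ : Equiv.Perm (Fin (m+1)) → Equiv.Perm (Fin (m+1)))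
    (hφ : ∀ v, IsPhi v (φ v)) (V : Equiv.Perm (Fin (m+1))) (L : List (Fin (m+1)))
    (hV : oneLineF V = L ++ [Fin.last m]) :
    oneLineF (φ V) = Fin.last m :: L := by
  obtain ⟨u', h1, h2⟩ := hφ V
  have h1' : foataWord u' = Fin.last m :: L.reverse := by
    rw [hV] at h1; simpa using h1
  rw [h2, claimA h1', List.reverse_reverse]

lemma step2 {m : ℕ} (φ : Equiv.Perm (Fin (m+1)) → Equiv.Perm (Fin (m+1)))
    (hφ : ∀ v, IsPhi v (φ v))
    (ψ : Equiv.Perm (Fin m) → Equiv.Perm (Fin m)) (hψ : ∀ v, IsPhi v (ψ v))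
    (V : Equiv.Perm (Fin (m+1))) (v : Equiv.Perm (Fin m))
    (hV : oneLineF V = Fin.last m :: (oneLineF v).map Fin.castSucc) :
    oneLineF (φ V) = (oneLineF (ψ v)).map Fin.castSucc ++ [Fin.last m] := by
  obtain ⟨u'', h1, h2⟩ := hφ V
  obtain ⟨s, hs1, hs2⟩ := hψ v
  have h1' : foataWord u'' = ((oneLineF v).reverse).map Fin.castSucc ++ [Fin.last m] := by
    rw [hV] at h1; simpa [List.map_reverse] using h1
  have hext : foataWord (ext s) = ((oneLineF v).reverse).map Fin.castSucc ++ [Fin.last m] := by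
    rw [foataWord_ext, hs1]
  have hus : u'' = ext s := foataWord_injective (h1'.trans hext.symm)
  rw [h2, hus, ext_inv, foataWord_ext, hs2]

lemma oneLineN_eq_map_val (w : Equiv.Perm (Fin n)) :
    oneLineN w = (oneLineF w).map Fin.val := by
  simp only [oneLineN, oneLineF, List.map_map]
  rfl

lemma finRange_map_val (k : ℕ) : (List.finRange k).map Fin.val = List.range k := by
  apply List.ext_getElem <;> simp

lemma filter_lt_range (k x : ℕ) (h : x ≤ k) :
    ((List.range k).filter (fun y => decide (y < x))).length = x := by
  induction k with
  | zero => simp; omega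
  | succ k ih =>
    rw [List.range_succ, List.filter_append]
    rcases Nat.lt_or_ge x (k+1) with hx | hx
    · have hxk : x ≤ k := by omega
      rw [List.length_append, ih hxk]
      have : ¬ (k < x) := by omega
      simp [this]
    · have hxe : x = k + 1 := by omega
      subst hxe
      rw [List.length_append]
      have h1 : (List.range k).filter (fun y => decide (y < k+1)) = List.range k := by
        apply List.filter_eq_self.2
        intro a ha
        simp only [decide_eq_true_iff]
        have := List.mem_range.1 ha
        omega
      rw [h1]
      simp

lemma main_statement (n : ℕ) (w : Equiv.Perm (Fin n)) (A : List ℕ)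
    (hA : A ≠ []) (hw : oneLineN w = A ++ [n - 1])
    (φ : Equiv.Perm (Fin n) → Equiv.Perm (Fin n))
    (hφ : ∀ v, IsPhi v (φ v))
    (ψ : Equiv.Perm (Fin A.length) → Equiv.Perm (Fin A.length))
    (hψ : ∀ v, IsPhi v (ψ v))
    (u : Equiv.Perm (Fin A.length)) (hu : oneLineN u = stdz A) :
    Function.minimalPeriod φ w = 2 * Function.minimalPeriod ψ u := by
  classical
  have hlen : n = A.length + 1 := by
    have h := congrArg List.length hw
    simp [oneLineN] at h
    omega
  subst hlen
  simp only [Nat.add_sub_cancel] at hw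
  -- A is a permutation of range A.length
  have hperm1 : oneLineF w ~ List.finRange (A.length+1) := by
    refine (List.perm_ext_iff_of_nodup ?_ (List.nodup_finRange _)).2 ?_
    · exact (List.nodup_finRange _).map w.injective
    · intro a
      simp only [oneLineF, List.mem_map, List.mem_finRange, true_and, iff_true]
      exact ⟨w⁻¹ a, by simp⟩
  have hperm2 : oneLineN w ~ List.range (A.length+1) := by
    rw [oneLineN_eq_map_val, ← finRange_map_val (A.length+1)]
    exact hperm1.map Fin.val
  rw [hw] at hperm2
  have hpermA : A ~ List.range A.length := by
    refine (List.perm_iff_count).2 (fun x => ?_)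
    have hc := (List.perm_iff_count).1 hperm2 x
    rw [List.range_succ] at hc
    simp only [List.count_append] at hc
    omega
  have hmemA : ∀ x ∈ A, x < A.length := fun x hx => List.mem_range.1 (hpermA.mem_iff.1 hx)
  have hstdz : stdz A = A := by
    unfold stdz
    have : ∀ x ∈ A, (A.filter fun y => decide (y < x)).length = x := by
      intro x hx
      rw [← List.countP_eq_length_filter, hpermA.countP_eq, List.countP_eq_length_filter]
      exact filter_lt_range A.length x (le_of_lt (hmemA x hx))
    rw [List.map_congr_left (fun x hx => this x hx)]
    exact List.map_id A
  rw [hstdz] at hu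
  -- w = ext u
  have hONext : oneLineN (ext u) = A ++ [A.length] := by
    rw [oneLineN_eq_map_val, oneLineF_ext u (ext u) (ext_castSucc u) (ext_last u),
      List.map_append, List.map_map]
    have h1 : (Fin.val ∘ Fin.castSucc (n := A.length)) = Fin.val := by
      funext y; simp
    rw [h1, ← oneLineN_eq_map_val, hu]
    simp
  have hwext : w = ext u := by
    apply oneLineF_injective
    apply List.map_injective_iff.2 Fin.val_injective
    rw [← oneLineN_eq_map_val, ← oneLineN_eq_map_val, hw, hONext]
  -- the orbit structure
  have key : ∀ k, oneLineF (φ^[2*k] w) = (oneLineF (ψ^[k] u)).map Fin.castSucc ++ [Fin.last A.length]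
      ∧ oneLineF (φ^[2*k+1] w) = Fin.last A.length :: (oneLineF (ψ^[k] u)).map Fin.castSucc := by
    intro k
    induction k with
    | zero =>
      have h0 : oneLineF (φ^[2*0] w) = (oneLineF (ψ^[0] u)).map Fin.castSucc ++ [Fin.last A.length] := by
        simp only [Nat.mul_zero, Function.iterate_zero, id_eq]
        rw [hwext]
        exact oneLineF_ext u (ext u) (ext_castSucc u) (ext_last u)
      refine ⟨h0, ?_⟩
      have h1 := step1 φ hφ (φ^[2*0] w) _ h0
      rw [← Function.iterate_succ_apply' φ] at h1
      exact h1
    | succ k ih =>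
      have heq : 2*(k+1) = (2*k+1)+1 := by ring
      have h2 := step2 φ hφ ψ hψ (φ^[2*k+1] w) (ψ^[k] u) ih.2
      rw [← Function.iterate_succ_apply' φ, ← Function.iterate_succ_apply' ψ] at h2
      rw [show (2*k+1).succ = 2*(k+1) by omega] at h2
      refine ⟨h2, ?_⟩
      have h3 := step1 φ hφ (φ^[2*(k+1)] w) _ h2
      rw [← Function.iterate_succ_apply' φ] at h3
      exact h3
  have e_even : ∀ k, φ^[2*k] w = ext (ψ^[k] u) := by
    intro k
    apply oneLineF_injective
    rw [(key k).1, oneLineF_ext (ψ^[k] u) (ext _) (ext_castSucc _) (ext_last _)]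
  have hm1 : 1 ≤ A.length := List.length_pos_iff.2 hA
  have hodd : ∀ k, φ^[2*k+1] w ≠ w := by
    intro k he
    have h1 := (key k).2
    rw [he] at h1
    have h0 : oneLineF w = (oneLineF u).map Fin.castSucc ++ [Fin.last A.length] := by
      rw [hwext]
      exact oneLineF_ext u (ext u) (ext_castSucc u) (ext_last u)
    rw [h0] at h1
    rcases hX : oneLineF u with _ | ⟨x, X'⟩
    · have := oneLineF_length u
      rw [hX] at this
      simp at this
      omega
    · rw [hX] at h1
      have hh := congrArg List.head? h1
      simp at hh
  -- period bookkeeping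
  have even_iff : ∀ j, φ^[j] w = w → ∃ k, j = 2*k ∧ ψ^[k] u = u := by
    intro j hjw
    rcases Nat.even_or_odd j with ⟨k, hk⟩ | ⟨k, hk⟩
    · have h2k : j = 2*k := by omega
      rw [h2k, e_even k, hwext] at hjw
      exact ⟨k, h2k, ext_injective hjw⟩
    · exfalso
      rw [hk] at hjw
      exact hodd k hjw
  by_cases ha : Function.minimalPeriod ψ u = 0
  · rw [ha, Nat.mul_zero]
    by_contra hp
    have hppos : 0 < Function.minimalPeriod φ w := Nat.pos_of_ne_zero hp
    obtain ⟨k, hk, hku⟩ := even_iff _ (Function.iterate_minimalPeriod)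
    have hkpos : 0 < k := by omega
    have : 0 < Function.minimalPeriod ψ u :=
      (show Function.IsPeriodicPt ψ k u from hku).minimalPeriod_pos hkpos
    omega
  · have hapos : 0 < Function.minimalPeriod ψ u := Nat.pos_of_ne_zero ha
    have hau : ψ^[Function.minimalPeriod ψ u] u = u := Function.iterate_minimalPeriod
    have hw2a : φ^[2 * Function.minimalPeriod ψ u] w = w := by
      rw [e_even _, hau, ← hwext]
    have hple : Function.minimalPeriod φ w ≤ 2 * Function.minimalPeriod ψ u :=
      (show Function.IsPeriodicPt φ _ w from hw2a).minimalPeriod_le (by omega)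
    have hppos : 0 < Function.minimalPeriod φ w :=
      (show Function.IsPeriodicPt φ _ w from hw2a).minimalPeriod_pos (by omega)
    obtain ⟨k, hk, hku⟩ := even_iff _ (Function.iterate_minimalPeriod)
    have hak : Function.minimalPeriod ψ u ≤ k :=
      (show Function.IsPeriodicPt ψ k u from hku).minimalPeriod_le (by omega)
    omega

end Foata

/-- If `w = A n` in one-line notation (the maximum last, `A`
nonempty), then the `φ`-orbit of `w` has size exactly twice the size of the
`φ`-orbit of `A` (viewed, via the canonical order-isomorphism, as the orbit of
the standardization of `A` under `φ` acting on `S_{|A|}`), where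
`φ = F ∘ I ∘ F⁻¹ ∘ R`. -/
theorem phi_orbit_double (n : ℕ) (w : Equiv.Perm (Fin n)) (A : List ℕ)
    (hA : A ≠ []) (hw : oneLineN w = A ++ [n - 1])
    (φ : Equiv.Perm (Fin n) → Equiv.Perm (Fin n))
    (hφ : ∀ v, IsPhi v (φ v))
    (ψ : Equiv.Perm (Fin A.length) → Equiv.Perm (Fin A.length))
    (hψ : ∀ v, IsPhi v (ψ v))
    (u : Equiv.Perm (Fin A.length)) (hu : oneLineN u = stdz A) :
    Function.minimalPeriod φ w = 2 * Function.minimalPeriod ψ u := by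
  exact Foata.main_statement n w A hA hw φ hφ ψ hψ u hu
end
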